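/- Let a complete product basis be weakly unambiguous, i.e.: (i) for every party k and any two distinct settings x_k ≠ x'_k occurring among the events, the setting bases are disjoint as sets of vectors (|(a_k|x_k)⟩ ≠ |(a'_k|x'_k)⟩ for all a_k, a'_k); and (ii) the events satisfy pairwise exclusivity. Then there exists an unambiguous complete product basis with the same setting sets X_k, the same outcome sets A_k, and the same family of events (a^j | x^j) (hence the same induced function w): that is, one can choose for each party k and each occurring setting x_k a new orthonormal basis (|(a_k|x_k)⟩')_{a_k ∈ A_k} of ℂ^{d_k} such that the resulting product vectors are still pairwise orthogonal and the unambiguity condition holds. -/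

import Mathlib

noncomputable section
open scoped BigOperators

def wvec {α : Type} [Fintype α] [DecidableEq α] (d : ℕ) (g : α ≃ Fin d) (z : ℂ) (a : α) :
    EuclideanSpace ℂ (Fin d) := WithLp.toLp 2 (fun i => (if i = g a then 1 else 0) + (z - 1) / d)

lemma aux_inner {α : Type} [Fintype α] [DecidableEq α] (d : ℕ) (hd : d ≠ 0)
    (g : α ≃ Fin d) (z z' : ℂ) (a a' : α) :
    (inner (𝕜 := ℂ) (wvec d g z a) (wvec d g z' a'))
    = (if a = a' then 1 else 0) + ((starRingEnd ℂ) z * z' - 1) / d := by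
  rw [PiLp.inner_apply]
  have hc : ∀ i : Fin d,
      (inner (𝕜 := ℂ) (wvec d g z a i) (wvec d g z' a' i))
      = (if i = g a then 1 else 0) * (if i = g a' then 1 else 0)
        + (if i = g a then 1 else 0) * ((z' - 1) / d)
        + ((starRingEnd ℂ) z - 1) / d * (if i = g a' then 1 else 0)
        + ((starRingEnd ℂ) z - 1) / d * ((z' - 1) / d) := by
    intro i
    simp only [wvec, PiLp.toLp_apply, RCLike.inner_apply, map_add, map_div₀, map_sub, map_one, map_natCast,
      apply_ite (starRingEnd ℂ), map_zero]
    ring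
  simp_rw [hc]
  rw [Finset.sum_add_distrib, Finset.sum_add_distrib, Finset.sum_add_distrib]
  have h1 : (∑ i : Fin d, (if i = g a then (1:ℂ) else 0) * (if i = g a' then 1 else 0))
      = if a = a' then 1 else 0 := by
    rcases eq_or_ne a a' with rfl | hne
    · simp [ite_mul, Finset.sum_ite_eq']
    · have hg : g a ≠ g a' := fun hgg => hne (g.injective hgg)
      simp [ite_mul, Finset.sum_ite_eq', hg, hne, Ne.symm hne]
  have h2 : (∑ i : Fin d, (if i = g a then (1:ℂ) else 0) * ((z' - 1) / d))
      = (z' - 1) / d := by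
    simp [ite_mul, Finset.sum_ite_eq']
  have h3 : (∑ i : Fin d, ((starRingEnd ℂ) z - 1) / d * (if i = g a' then (1:ℂ) else 0))
      = ((starRingEnd ℂ) z - 1) / d := by
    simp [mul_ite, Finset.sum_ite_eq']
  have h4 : (∑ _i : Fin d, ((starRingEnd ℂ) z - 1) / d * ((z' - 1) / d))
      = (d : ℂ) * (((starRingEnd ℂ) z - 1) / d * ((z' - 1) / d)) := by
    simp [Finset.sum_const, nsmul_eq_mul]
  rw [h1, h2, h3, h4]
  have hdc : (d : ℂ) ≠ 0 := Nat.cast_ne_zero.mpr hd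
  rcases eq_or_ne a a' with rfl | hne
  · field_simp
    ring
  · simp only [hne, if_false]
    field_simp
    ring

lemma int_ne_int_mul_pi (m n : ℤ) (hm : m ≠ 0) : (m : ℝ) ≠ n * Real.pi := by
  intro h
  rcases eq_or_ne n 0 with rfl | hn
  · simp at h
    exact hm (by exact_mod_cast h)
  · have hnr : (n : ℝ) ≠ 0 := Int.cast_ne_zero.mpr hn
    have hpi : Real.pi = (m : ℝ) / n := by
      rw [eq_div_iff hnr, h]; ring
    have : Irrational (((m : ℚ) / (n : ℚ) : ℚ) : ℝ) := by
      rw [show (((m : ℚ) / (n : ℚ) : ℚ) : ℝ) = (m : ℝ) / (n : ℝ) by push_cast; ring, ← hpi]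
      exact irrational_pi
    exact Rat.not_irrational _ this

lemma exp_int_mul_I_ne_one (m : ℤ) (hm : m ≠ 0) :
    Complex.exp ((m : ℝ) * Complex.I) ≠ 1 := by
  intro h
  rw [Complex.exp_eq_one_iff] at h
  obtain ⟨q, hq⟩ := h
  have h2 : ((m : ℝ) : ℂ) = (q : ℂ) * (2 * (Real.pi : ℂ)) := by
    have := mul_right_cancel₀ Complex.I_ne_zero (by rw [hq]; push_cast; ring :
      ((m : ℝ) : ℂ) * Complex.I = ((q : ℂ) * (2 * (Real.pi : ℂ))) * Complex.I)
    exact this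
  have h3 : (m : ℝ) = (2 * q : ℤ) * Real.pi := by
    have h2' : (m : ℝ) = (q : ℝ) * (2 * Real.pi) := by exact_mod_cast h2
    push_cast
    linarith
  exact int_ne_int_mul_pi m (2 * q) hm h3

lemma exp_int_mul_I_ne_neg_one (m : ℤ) (hm : m ≠ 0) :
    Complex.exp ((m : ℝ) * Complex.I) ≠ -1 := by
  intro h
  have h2 : Complex.exp (((2 * m : ℤ) : ℝ) * Complex.I) = 1 := by
    have : (((2 * m : ℤ) : ℝ) : ℂ) * Complex.I
        = ((m : ℝ) : ℂ) * Complex.I + ((m : ℝ) : ℂ) * Complex.I := by push_cast; ring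
    rw [this, Complex.exp_add, h]; ring
  exact exp_int_mul_I_ne_one (2 * m) (by omega) h2

lemma exp_int_mul_I_ne_one_sub (m : ℤ) (hm : m ≠ 0) (d : ℕ) (hd : 1 ≤ d) :
    Complex.exp ((m : ℝ) * Complex.I) ≠ 1 - d := by
  intro h
  have habs : ‖Complex.exp ((m : ℝ) * Complex.I)‖ = 1 :=
    Complex.norm_exp_ofReal_mul_I m
  rw [h] at habs
  have hcast : (((1 : ℝ) - d : ℝ) : ℂ) = 1 - d := by push_cast; ring
  rw [← hcast, Complex.norm_real, Real.norm_eq_abs] at habs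
  have hd1 : (1 : ℝ) ≤ (d : ℝ) := by exact_mod_cast hd
  rw [abs_of_nonpos (by linarith)] at habs
  have hd2 : d = 2 := by
    have : (d : ℝ) = 2 := by linarith
    exact_mod_cast this
  subst hd2
  rw [show ((1 : ℂ) - (2 : ℕ)) = -1 by push_cast; ring] at h
  exact exp_int_mul_I_ne_neg_one m hm h

lemma conj_exp_mul (m m' : ℕ) :
    (starRingEnd ℂ) (Complex.exp ((m : ℝ) * Complex.I)) * Complex.exp ((m' : ℝ) * Complex.I)
    = Complex.exp ((((m' : ℤ) - (m : ℤ) : ℤ) : ℝ) * Complex.I) := by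
  rw [← Complex.exp_conj, ← Complex.exp_add]
  congr 1
  rw [map_mul, Complex.conj_ofReal, Complex.conj_I]
  push_cast
  ring

/-- **Weak unambiguity suffices up to local rotations** (Lemma D.3): if a
complete product basis is weakly unambiguous — its occurring setting bases are
pairwise disjoint as sets of vectors, and its events satisfy pairwise
exclusivity — then there is a choice of new local orthonormal bases, with the
same setting sets, outcome sets, and events (hence the same induced function),
making the basis a complete product basis that is unambiguous. -/
theorem weakly_unambiguous_to_unambiguous
    -- `n` parties with local dimensions `d k`
    {n : ℕ} (hn : 1 ≤ n) (d : Fin n → ℕ) (hd : ∀ k, 1 ≤ d k)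
    -- outcome sets `A k` with `|A k| = d k`, finite nonempty setting sets `X k`
    (A : Fin n → Type) [∀ k, Fintype (A k)] [∀ k, DecidableEq (A k)]
    (hA : ∀ k, Fintype.card (A k) = d k)
    (X : Fin n → Type) [∀ k, Fintype (X k)] [∀ k, Nonempty (X k)]
    [∀ k, DecidableEq (X k)]
    -- local vectors `|(a_k|x_k)⟩`, an orthonormal basis for each setting
    (v : ∀ k : Fin n, X k → A k → EuclideanSpace ℂ (Fin (d k)))
    (hv : ∀ (k : Fin n) (x : X k), Orthonormal ℂ (v k x))
    -- `N = ∏_k d_k` pairwise distinct events with pairwise orthogonal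
    -- product vectors (a complete product basis)
    {N : ℕ} (hN : N = ∏ k, d k)
    (e : Fin N → (∀ k, A k) × (∀ k, X k))
    (he : Function.Injective e)
    (horth : ∀ j j' : Fin N, j ≠ j' →
      (∏ k : Fin n,
        (inner ℂ (v k ((e j).2 k) ((e j).1 k))
          (v k ((e j').2 k) ((e j').1 k)) : ℂ)) = 0)
    -- (i) occurring setting bases are disjoint as sets of vectors
    (hdisj : ∀ (k : Fin n) (x x' : X k),
      (∃ j, (e j).2 k = x) → (∃ j, (e j).2 k = x') → x ≠ x' →
      ∀ a a' : A k, v k x a ≠ v k x' a')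
    -- (ii) pairwise exclusivity of the events
    (hexcl : ∀ j j' : Fin N, j ≠ j' →
      ∃ k : Fin n, (e j).2 k = (e j').2 k ∧ (e j).1 k ≠ (e j').1 k) :
    ∃ v' : ∀ k : Fin n, X k → A k → EuclideanSpace ℂ (Fin (d k)),
      -- new local orthonormal bases for each setting
      (∀ (k : Fin n) (x : X k), Orthonormal ℂ (v' k x)) ∧
      -- the same events still have pairwise orthogonal product vectors
      (∀ j j' : Fin N, j ≠ j' →
        (∏ k : Fin n,
          (inner ℂ (v' k ((e j).2 k) ((e j).1 k))
            (v' k ((e j').2 k) ((e j').1 k)) : ℂ)) = 0) ∧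
      -- and the unambiguity condition holds
      (∀ (k : Fin n) (a a' : A k) (x x' : X k),
        (∃ j, (e j).1 k = a ∧ (e j).2 k = x) →
        (∃ j, (e j).1 k = a' ∧ (e j).2 k = x') →
        v' k x a ≠ v' k x' a' →
        ((inner ℂ (v' k x a) (v' k x' a') : ℂ) = 0 ↔ x = x')) := by
  have hd0 : ∀ k : Fin n, (d k : ℂ) ≠ 0 :=
    fun k => Nat.cast_ne_zero.mpr (Nat.one_le_iff_ne_zero.mp (hd k))
  set g : ∀ k : Fin n, A k ≃ Fin (d k) := fun k => Fintype.equivFinOfCardEq (hA k) with hg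
  set ι : ∀ k : Fin n, X k → ℕ := fun k x => (Fintype.equivFin (X k) x : ℕ) with hι
  have hιinj : ∀ k : Fin n, Function.Injective (ι k) :=
    fun k => Fin.val_injective.comp (Fintype.equivFin (X k)).injective
  set z : ∀ k : Fin n, X k → ℂ := fun k x => Complex.exp ((ι k x : ℝ) * Complex.I) with hz
  -- key inner product formula
  have key : ∀ (k : Fin n) (x x' : X k) (a a' : A k),
      (inner (𝕜 := ℂ) (wvec (d k) (g k) (z k x) a) (wvec (d k) (g k) (z k x') a'))
      = (if a = a' then 1 else 0)
        + (Complex.exp ((((ι k x' : ℤ) - (ι k x : ℤ) : ℤ) : ℝ) * Complex.I) - 1) / (d k) := by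
    intro k x x' a a'
    rw [aux_inner (d k) (Nat.one_le_iff_ne_zero.mp (hd k)) (g k) (z k x) (z k x') a a',
      hz, conj_exp_mul]
  have same : ∀ (k : Fin n) (x : X k) (a a' : A k),
      (inner (𝕜 := ℂ) (wvec (d k) (g k) (z k x) a) (wvec (d k) (g k) (z k x) a'))
      = if a = a' then 1 else 0 := by
    intro k x a a'
    rw [key]
    norm_num
  -- nonzero inner product across distinct settings
  have cross : ∀ (k : Fin n) (x x' : X k), x ≠ x' → ∀ a a' : A k,
      (inner (𝕜 := ℂ) (wvec (d k) (g k) (z k x) a) (wvec (d k) (g k) (z k x') a')) ≠ 0 := by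
    intro k x x' hxx a a'
    rw [key]
    set m : ℤ := ((ι k x' : ℤ) - (ι k x : ℤ)) with hm
    have hm0 : m ≠ 0 := by
      intro hc
      have h1 : (ι k x' : ℤ) = (ι k x : ℤ) := sub_eq_zero.mp (hm ▸ hc)
      have h2 : ι k x' = ι k x := by exact_mod_cast h1
      exact hxx (hιinj k h2).symm
    set u : ℂ := Complex.exp ((m : ℝ) * Complex.I) with hu
    rcases eq_or_ne a a' with rfl | hne
    · simp only [if_pos rfl, ↓reduceIte]
      intro hcon
      apply exp_int_mul_I_ne_one_sub m hm0 (d k) (hd k)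
      rw [← hu]
      field_simp [hd0 k] at hcon
      linear_combination hcon
    · simp only [hne, if_false, zero_add]
      exact div_ne_zero (sub_ne_zero.mpr (exp_int_mul_I_ne_one m hm0)) (hd0 k)
  refine ⟨fun k x => wvec (d k) (g k) (z k x), ?_, ?_, ?_⟩
  · intro k x
    rw [orthonormal_iff_ite]
    intro a a'
    exact same k x a a'
  · intro j j' hne
    obtain ⟨k, hxk, hak⟩ := hexcl j j' hne
    apply Finset.prod_eq_zero (Finset.mem_univ k)
    rw [hxk, same]
    simp [hak]
  · intro k a a' x x' _ _ hvne
    rcases eq_or_ne x x' with rfl | hxx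
    · simp only [iff_true]
      have hne : a ≠ a' := fun hc => hvne (by rw [hc])
      rw [same]
      simp [hne]
    · simp only [hxx, iff_false]
      exact cross k x x' hxx a a'


end
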